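/- arXiv:2203.06101 — 2 statements merged into one kernel-verified Lean document; each statement's English description precedes it below -/
import Mathlib

section
/- Let N be a positive integer and suppose N = x·φ^m/√5 for some x ∈ [0,1) and integer m ≥ 2, where x has base-φ expansion x = ∑_{i=1}^∞ δ_i·φ^{-i} with digits δ_i ∈ {0,1}, no two consecutive digits equal to 1, and the digit sequence not ultimately 0,1,0,1,.... Then N = ∑_{i=1}^{m-1} δ_{m-i}·F_i, and this is the Zeckendorf representation of N; moreover δ_m = 0. -/
open Real goldenRatio

set_option maxHeartbeats 1000000

private lemma grinv_pos : (0:ℝ) < φ⁻¹ := inv_pos.mpr goldenRatio_pos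
private lemma grinv_lt_one : φ⁻¹ < 1 := inv_lt_one_of_one_lt₀ one_lt_goldenRatio

private lemma sumGeo : Summable (fun k : ℕ => φ⁻¹ ^ (k+1) : ℕ → ℝ) := by
  have h := (summable_geometric_of_lt_one grinv_pos.le grinv_lt_one).mul_left φ⁻¹
  apply h.congr
  intro k
  ring

private lemma sumE (e : ℕ → ℕ) (h1 : ∀ k, e k ≤ 1) :
    Summable (fun k : ℕ => (e k : ℝ) * φ⁻¹ ^ (k+1)) := by
  apply Summable.of_nonneg_of_le (fun k => by positivity) (fun k => ?_) sumGeo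
  have he : (e k : ℝ) ≤ 1 := by exact_mod_cast h1 k
  have hp : (0:ℝ) ≤ φ⁻¹ ^ (k+1) := by positivity
  calc (e k : ℝ) * φ⁻¹ ^ (k+1) ≤ 1 * φ⁻¹ ^ (k+1) := mul_le_mul_of_nonneg_right he hp
    _ = φ⁻¹ ^ (k+1) := one_mul _

private lemma sumGeoPair : Summable (fun k : ℕ => φ⁻¹ ^ (2*k+1) : ℕ → ℝ) := by
  have h2 : (φ⁻¹^2 : ℝ) < 1 := by nlinarith [grinv_pos, grinv_lt_one]
  have h := (summable_geometric_of_lt_one (by positivity : (0:ℝ) ≤ φ⁻¹^2) h2).mul_left φ⁻¹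
  apply h.congr
  intro k
  ring

private lemma tsumGeoPair : ∑' k : ℕ, (φ⁻¹:ℝ) ^ (2*k+1) = 1 := by
  have h2 : (φ⁻¹^2 : ℝ) < 1 := by nlinarith [grinv_pos, grinv_lt_one]
  have h0 : (0:ℝ) ≤ φ⁻¹^2 := by positivity
  calc ∑' k : ℕ, (φ⁻¹:ℝ) ^ (2*k+1) = ∑' k : ℕ, φ⁻¹ * (φ⁻¹^2)^k := by
        exact tsum_congr (fun k => by ring)
    _ = φ⁻¹ * (1 - φ⁻¹^2)⁻¹ := by rw [tsum_mul_left, tsum_geometric_of_lt_one h0 h2]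
    _ = 1 := by
        have hh : (1 : ℝ) - φ⁻¹^2 = φ⁻¹ := by
          rw [inv_goldenRatio]
          linear_combination -goldenConj_sq
        rw [hh, mul_inv_cancel₀ (ne_of_gt grinv_pos)]

private lemma E_lt_one (e : ℕ → ℕ) (h1 : ∀ k, e k ≤ 1)
    (hnc : ∀ k, e k * e (k+1) = 0) (hz : ∃ i, e i = 0 ∧ e (i+1) = 0) :
    ∑' k : ℕ, (e k : ℝ) * φ⁻¹ ^ (k+1) < 1 := by
  set f : ℕ → ℝ := fun k => (e k : ℝ) * φ⁻¹ ^ (k+1) with hf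
  have hfnn : ∀ k, 0 ≤ f k := fun k => by
    simp only [hf]; positivity
  have hs : Summable f := sumE e h1
  have hse : Summable (fun k => f (2*k)) := hs.comp_injective (fun a b h => by omega)
  have hso : Summable (fun k => f (2*k+1)) := hs.comp_injective (fun a b h => by omega)
  have hsplit : ∑' k, f k = ∑' k, (f (2*k) + f (2*k+1)) := by
    rw [hse.tsum_add hso, tsum_even_add_odd hse hso]
  have hb : ∀ k, f (2*k) + f (2*k+1) ≤ φ⁻¹ ^ (2*k+1) := by
    intro k
    by_cases h0 : e (2*k) = 0
    · have h0' : f (2*k) = 0 := by simp [hf, h0]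
      have hle : f (2*k+1) ≤ φ⁻¹ ^ (2*k+1+1) := by
        have hcast : (e (2*k+1) : ℝ) ≤ 1 := by exact_mod_cast h1 _
        have hp : (0:ℝ) ≤ φ⁻¹ ^ (2*k+1+1) := by positivity
        calc f (2*k+1) = (e (2*k+1):ℝ) * φ⁻¹^(2*k+1+1) := rfl
          _ ≤ 1 * φ⁻¹^(2*k+1+1) := mul_le_mul_of_nonneg_right hcast hp
          _ = _ := one_mul _
      rw [h0', zero_add]
      exact hle.trans (pow_le_pow_of_le_one grinv_pos.le grinv_lt_one.le (by omega))
    · have h0' : e (2*k) = 1 := by have := h1 (2*k); omega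
      have h1' : e (2*k+1) = 0 := by have := hnc (2*k); rw [h0'] at this; omega
      simp [hf, h0', h1']
  obtain ⟨i, hi0, hi1⟩ := hz
  have hstrict : ∃ j, f (2*j) + f (2*j+1) < φ⁻¹ ^ (2*j+1) := by
    rcases Nat.even_or_odd i with ⟨j, hj⟩ | ⟨j, hj⟩
    · refine ⟨j, ?_⟩
      have e0 : e (2*j) = 0 := by rw [show 2*j = i by omega]; exact hi0
      have e1 : e (2*j+1) = 0 := by rw [show 2*j+1 = i+1 by omega]; exact hi1
      simp only [hf, e0, e1, Nat.cast_zero, zero_mul, add_zero]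
      positivity
    · refine ⟨j+1, ?_⟩
      have e0 : e (2*(j+1)) = 0 := by rw [show 2*(j+1) = i+1 by omega]; exact hi1
      have hle : f (2*(j+1)+1) ≤ φ⁻¹ ^ (2*(j+1)+1+1) := by
        have hcast : (e (2*(j+1)+1) : ℝ) ≤ 1 := by exact_mod_cast h1 _
        have hp : (0:ℝ) ≤ φ⁻¹ ^ (2*(j+1)+1+1) := by positivity
        calc f (2*(j+1)+1) = (e (2*(j+1)+1):ℝ) * φ⁻¹^(2*(j+1)+1+1) := rfl
          _ ≤ 1 * φ⁻¹^(2*(j+1)+1+1) := mul_le_mul_of_nonneg_right hcast hp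
          _ = _ := one_mul _
      have hlt : (φ⁻¹:ℝ) ^ (2*(j+1)+1+1) < φ⁻¹ ^ (2*(j+1)+1) :=
        pow_lt_pow_right_of_lt_one₀ grinv_pos grinv_lt_one (by omega)
      have e0' : f (2*(j+1)) = 0 := by simp [hf, e0]
      rw [e0', zero_add]
      exact lt_of_le_of_lt hle hlt
  obtain ⟨j, hj⟩ := hstrict
  calc ∑' k, f k = ∑' k, (f (2*k) + f (2*k+1)) := hsplit
    _ < ∑' k : ℕ, (φ⁻¹:ℝ) ^ (2*k+1) :=
        Summable.tsum_lt_tsum_of_nonneg (fun q => add_nonneg (hfnn _) (hfnn _)) hb hj sumGeoPair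
    _ = 1 := tsumGeoPair

private lemma E_shift (e : ℕ → ℕ) (h1 : ∀ k, e k ≤ 1) (h0 : e 0 = 0) :
    ∑' k : ℕ, (e k : ℝ) * φ⁻¹ ^ (k+1)
      = φ⁻¹ * ∑' k : ℕ, (e (k+1) : ℝ) * φ⁻¹ ^ (k+1) := by
  rw [Summable.tsum_eq_zero_add (sumE e h1)]
  rw [h0]
  simp only [Nat.cast_zero, zero_mul, zero_add]
  rw [← tsum_mul_left]
  exact tsum_congr (fun k => by ring)

theorem stmt5 (N : ℕ) (hN : 0 < N) (m : ℕ) (hm : 2 ≤ m)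
    (x : ℝ) (hx : x ∈ Set.Ico (0 : ℝ) 1)
    (d : ℕ → ℕ)
    (h01 : ∀ i, d i ≤ 1)
    (hnc : ∀ i, 1 ≤ i → d i * d (i + 1) = 0)
    (hnu : ∀ k, ∃ i, k ≤ i ∧ 1 ≤ i ∧ d i = 0 ∧ d (i + 1) = 0)
    (hexp : x = ∑' i : ℕ, (d (i + 1) : ℝ) * φ⁻¹ ^ (i + 1))
    (hNx : (N : ℝ) = x * φ ^ m / Real.sqrt 5) :
    N = (∑ i ∈ Finset.Icc 1 (m - 1), d (m - i) * Nat.fib i) ∧ d m = 0 := by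
  obtain ⟨n, rfl⟩ : ∃ n, m = n + 1 := ⟨m - 1, by omega⟩
  have hn : 1 ≤ n := by omega
  have hs5 : Real.sqrt 5 = 2*φ - 1 := by rw [goldenRatio]; ring
  have hs5pos : (0:ℝ) < Real.sqrt 5 := Real.sqrt_pos.mpr (by norm_num)
  have hNs5 : (N:ℝ) * Real.sqrt 5 = x * φ ^ (n+1) := by
    rw [hNx]
    exact div_mul_cancel₀ _ hs5pos.ne'
  -- digit sequences
  set c : ℕ → ℕ := fun j => if j < n then d (n - j) else 0 with hc
  set b : ℕ → ℕ := fun k => d (k + n + 2) with hbdef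
  have hc1 : ∀ j, c j ≤ 1 := fun j => by by_cases h : j < n <;> simp [hc, h, h01]
  have hb1 : ∀ k, b k ≤ 1 := fun k => h01 _
  have hcnc : ∀ j, c j * c (j+1) = 0 := by
    intro j
    by_cases h2 : j + 1 < n
    · have h1j : j < n := by omega
      simp only [hc, if_pos h2, if_pos h1j]
      have hthis := hnc (n - (j+1)) (by omega)
      rw [show n - (j+1) + 1 = n - j by omega] at hthis
      rw [Nat.mul_comm]
      exact hthis
    · simp [hc, h2]
  have hcz : ∃ i, c i = 0 ∧ c (i+1) = 0 := by
    refine ⟨n, ?_, ?_⟩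
    · show (if n < n then d (n - n) else 0) = 0
      rw [if_neg (by omega)]
    · show (if n + 1 < n then d (n - (n+1)) else 0) = 0
      rw [if_neg (by omega)]
  have hbnc : ∀ k, b k * b (k+1) = 0 := by
    intro k
    have hthis := hnc (k + n + 2) (by omega)
    show d (k + n + 2) * d (k + 1 + n + 2) = 0
    rw [show k + 1 + n + 2 = k + n + 2 + 1 by omega]
    exact hthis
  have hbz : ∃ i, b i = 0 ∧ b (i+1) = 0 := by
    obtain ⟨i, hki, _, hd0, hd1⟩ := hnu (n + 2)
    refine ⟨i - (n+2), ?_, ?_⟩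
    · show d (i - (n+2) + n + 2) = 0
      rw [show i - (n+2) + n + 2 = i by omega]; exact hd0
    · show d (i - (n+2) + 1 + n + 2) = 0
      rw [show i - (n+2) + 1 + n + 2 = i + 1 by omega]; exact hd1
  set Ec : ℝ := ∑' j : ℕ, (c j : ℝ) * φ⁻¹ ^ (j+1) with hEcdef
  set Eb : ℝ := ∑' k : ℕ, (b k : ℝ) * φ⁻¹ ^ (k+1) with hEbdef
  have hsum : Summable (fun i : ℕ => (d (i+1) : ℝ) * φ⁻¹ ^ (i+1)) :=
    sumE (fun i => d (i+1)) (fun i => h01 _)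
  have hEb_eq : x * φ ^ (n+1)
      = (∑ i ∈ Finset.range (n+1), (d (i+1):ℝ) * φ⁻¹ ^ (i+1)) * φ ^ (n+1) + Eb := by
    rw [hEbdef]
    have hsplit : (∑ i ∈ Finset.range (n+1), (d (i+1):ℝ) * φ⁻¹ ^ (i+1))
        + ∑' i : ℕ, (d (i + (n+1) + 1):ℝ) * φ⁻¹ ^ (i + (n+1) + 1)
        = ∑' i : ℕ, (d (i+1):ℝ) * φ⁻¹ ^ (i+1) :=
      Summable.sum_add_tsum_nat_add (n+1) hsum
    rw [hexp, ← hsplit, add_mul]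
    congr 1
    rw [← tsum_mul_right]
    apply tsum_congr
    intro k
    have hb' : (b k : ℝ) = (d (k + (n+1) + 1) : ℝ) := rfl
    have hmm : (φ:ℝ)⁻¹ ^ (k + (n+1) + 1) = φ⁻¹ ^ (k+1) * φ⁻¹ ^ (n+1) := by
      rw [← pow_add]; congr 1; omega
    have hpow2 : (φ⁻¹:ℝ) ^ (k + (n+1) + 1) * φ ^ (n+1) = φ⁻¹ ^ (k+1) := by
      rw [hmm, mul_assoc, ← mul_pow, inv_mul_cancel₀ goldenRatio_ne_zero, one_pow, mul_one]
    rw [mul_assoc, hpow2, hb']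
  have hS : (∑ i ∈ Finset.range (n+1), (d (i+1):ℝ) * φ⁻¹ ^ (i+1)) * φ ^ (n+1)
      = (∑ j ∈ Finset.range n, (d (n - j):ℝ) * φ ^ (j+1)) + (d (n+1) : ℝ) := by
    rw [Finset.sum_mul]
    have step1 : ∀ i ∈ Finset.range (n+1),
        (d (i+1):ℝ) * φ⁻¹ ^ (i+1) * φ ^ (n+1) = (d (n + 1 - (n - i)):ℝ) * φ ^ (n - i) := by
      intro i hi
      have hile : i < n + 1 := Finset.mem_range.mp hi
      have hmm : (φ:ℝ) ^ (n+1) = φ ^ (i+1) * φ ^ (n - i) := by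
        rw [← pow_add]; congr 1; omega
      have hpow : (φ⁻¹:ℝ) ^ (i+1) * φ ^ (n+1) = φ ^ (n - i) := by
        rw [hmm, ← mul_assoc, ← mul_pow, inv_mul_cancel₀ goldenRatio_ne_zero, one_pow, one_mul]
      rw [mul_assoc, hpow, show n + 1 - (n - i) = i + 1 by omega]
    rw [Finset.sum_congr rfl step1]
    have hrefl : ∑ i ∈ Finset.range (n+1), (d (n + 1 - (n - i)):ℝ) * φ ^ (n - i)
        = ∑ j ∈ Finset.range (n+1), (d (n + 1 - j):ℝ) * φ ^ j := by
      simpa using Finset.sum_range_reflect (fun j => (d (n + 1 - j):ℝ) * φ ^ j) (n+1)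
    rw [hrefl, Finset.sum_range_succ' (fun j => (d (n + 1 - j):ℝ) * φ ^ j) n]
    simp only [pow_zero, mul_one, Nat.sub_zero]
    congr 1
    apply Finset.sum_congr rfl
    intro j hj
    rw [show n + 1 - (j+1) = n - j by omega]
  set M : ℕ := ∑ i ∈ Finset.Icc 1 (n + 1 - 1), d (n + 1 - i) * Nat.fib i with hM
  have hMs5 : (M:ℝ) * Real.sqrt 5
      = ∑ j ∈ Finset.range n, (d (n - j):ℝ) * (φ^(j+1) - ψ^(j+1)) := by
    rw [hM]
    push_cast
    rw [Finset.sum_mul]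
    rw [← Finset.Ico_add_one_right_eq_Icc, Finset.sum_Ico_eq_sum_range]
    refine Finset.sum_congr (by first | rfl | (congr 1; omega)) ?_
    intro j hj
    rw [show n + 1 - (1 + j) = n - j by omega, show 1 + j = j + 1 by omega,
      Real.coe_fib_eq, mul_assoc, div_mul_cancel₀ _ hs5pos.ne']
  set A : ℝ := ∑ j ∈ Finset.range n, (d (n-j):ℝ) * ψ^(j+1) with hA
  have key : (N:ℝ) * Real.sqrt 5 = (M:ℝ) * Real.sqrt 5 + (d (n+1):ℝ) + A + Eb := by
    rw [hNs5, hEb_eq, hS, hMs5, hA]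
    have hsplit2 : ∑ j ∈ Finset.range n, (d (n-j):ℝ) * φ^(j+1)
        = (∑ j ∈ Finset.range n, (d (n-j):ℝ) * (φ^(j+1) - ψ^(j+1)))
          + ∑ j ∈ Finset.range n, (d (n-j):ℝ) * ψ^(j+1) := by
      rw [← Finset.sum_add_distrib]
      exact Finset.sum_congr rfl fun j _ => by ring
    rw [hsplit2]
    ring
  have hEc_lt : Ec < 1 := E_lt_one c hc1 hcnc hcz
  have hEc_nonneg : 0 ≤ Ec := by
    rw [hEcdef]; exact tsum_nonneg (fun j => by positivity)
  have hEb_lt : Eb < 1 := E_lt_one b hb1 hbnc hbz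
  have hEb_nonneg : 0 ≤ Eb := by
    rw [hEbdef]; exact tsum_nonneg (fun k => by positivity)
  have habspsi : |ψ| = φ⁻¹ := by
    rw [abs_of_neg goldenConj_neg, ← inv_goldenRatio]
  have hAbs : |A| ≤ Ec := by
    rw [hA]
    calc |∑ j ∈ Finset.range n, (d (n-j):ℝ) * ψ^(j+1)|
        ≤ ∑ j ∈ Finset.range n, |(d (n-j):ℝ) * ψ^(j+1)| := Finset.abs_sum_le_sum_abs _ _
      _ = ∑ j ∈ Finset.range n, (c j:ℝ) * φ⁻¹^(j+1) := by
          apply Finset.sum_congr rfl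
          intro j hj
          have hj' : j < n := Finset.mem_range.mp hj
          have hcj : ((c j : ℕ) : ℝ) = ((d (n-j) : ℕ) : ℝ) := by
            show ((if j < n then d (n - j) else 0 : ℕ) : ℝ) = _
            rw [if_pos hj']
          rw [abs_mul, abs_pow, Nat.abs_cast, habspsi, hcj]
      _ ≤ Ec := by
          rw [hEcdef]
          exact Summable.sum_le_tsum _ (fun j _ => by positivity) (sumE c hc1)
  have hNMgen : ∀ T : ℝ, ((N:ℝ) - (M:ℝ)) * Real.sqrt 5 = T → |T| < Real.sqrt 5 →
      (N:ℝ) = (M:ℝ) := by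
    intro T hT hTa
    have h2' : |(N:ℝ) - (M:ℝ)| < 1 := by
      have h1' : |(N:ℝ) - (M:ℝ)| * Real.sqrt 5 < Real.sqrt 5 := by
        have hx2 := hTa
        rw [← hT, abs_mul, abs_of_pos hs5pos] at hx2
        exact hx2
      by_contra hcon
      push_neg at hcon
      nlinarith
    have habs : ((|(N:ℤ) - (M:ℤ)| : ℤ) : ℝ) < 1 := by
      rw [Int.cast_abs]
      push_cast
      exact h2'
    have h3 : |(N:ℤ) - (M:ℤ)| < 1 := by exact_mod_cast habs
    rw [abs_lt] at h3
    have h4 : (N:ℤ) = (M:ℤ) := by omega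
    exact_mod_cast h4
  have hT : ((N:ℝ) - (M:ℝ)) * Real.sqrt 5 = (d (n+1):ℝ) + A + Eb := by
    rw [sub_mul, key]; ring
  have hdm0 : d (n+1) = 0 := by
    by_contra hne
    have hd1 : d (n+1) = 1 := by have := h01 (n+1); omega
    have hdn : d n = 0 := by have := hnc n hn; rw [hd1] at this; omega
    have hdn2 : d (n+1+1) = 0 := by
      have := hnc (n+1) (by omega); rw [hd1] at this; omega
    have hinv : (φ⁻¹ : ℝ) = φ - 1 := by
      rw [inv_eq_one_div, div_eq_iff goldenRatio_ne_zero]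
      nlinarith [goldenRatio_sq]
    -- Ec < φ⁻¹
    have hc0 : c 0 = 0 := by
      show (if 0 < n then d (n - 0) else 0) = 0
      rw [if_pos (show 0 < n by omega), Nat.sub_zero]
      exact hdn
    have hc'z : ∃ i, c (i+1) = 0 ∧ c (i+1+1) = 0 := by
      refine ⟨n, ?_, ?_⟩
      · show (if n + 1 < n then d (n - (n+1)) else 0) = 0
        rw [if_neg (by omega)]
      · show (if n + 1 + 1 < n then d (n - (n+1+1)) else 0) = 0
        rw [if_neg (by omega)]
    have h1t : (∑' k : ℕ, (c (k+1):ℝ) * φ⁻¹^(k+1)) < 1 :=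
      E_lt_one (fun k => c (k+1)) (fun k => hc1 _) (fun k => hcnc _) hc'z
    have h0t : 0 ≤ ∑' k : ℕ, ((c (k+1)):ℝ) * φ⁻¹^(k+1) :=
      tsum_nonneg (fun k => by positivity)
    have hEc_lt' : Ec < φ⁻¹ := by
      rw [hEcdef, E_shift c hc1 hc0]
      nlinarith [grinv_pos]
    -- Eb < φ⁻¹
    have hb0 : b 0 = 0 := by
      show d (0 + n + 2) = 0
      rw [show 0 + n + 2 = n + 1 + 1 by omega]
      exact hdn2
    have hb'z : ∃ i, b (i+1) = 0 ∧ b (i+1+1) = 0 := by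
      obtain ⟨i, hki, _, hd0', hd1'⟩ := hnu (n + 3)
      refine ⟨i - (n+3), ?_, ?_⟩
      · show d (i - (n+3) + 1 + n + 2) = 0
        rw [show i - (n+3) + 1 + n + 2 = i by omega]; exact hd0'
      · show d (i - (n+3) + 1 + 1 + n + 2) = 0
        rw [show i - (n+3) + 1 + 1 + n + 2 = i + 1 by omega]; exact hd1'
    have h2t : (∑' k : ℕ, (b (k+1):ℝ) * φ⁻¹^(k+1)) < 1 :=
      E_lt_one (fun k => b (k+1)) (fun k => hb1 _) (fun k => hbnc _) hb'z
    have h02t : 0 ≤ ∑' k : ℕ, ((b (k+1)):ℝ) * φ⁻¹^(k+1) :=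
      tsum_nonneg (fun k => by positivity)
    have hEb_lt' : Eb < φ⁻¹ := by
      rw [hEbdef, E_shift b hb1 hb0]
      nlinarith [grinv_pos]
    rw [hd1] at hT
    push_cast at hT
    have hub : 1 + A + Eb < Real.sqrt 5 := by
      have hAle : A ≤ Ec := le_trans (le_abs_self A) hAbs
      rw [hs5]
      linarith [hEc_lt', hEb_lt', hinv]
    have hlb : 0 < 1 + A + Eb := by
      have hAge : -Ec ≤ A := by
        have := neg_abs_le A
        linarith [hAbs]
      linarith [hEc_lt, hEb_nonneg]
    have hNM := hNMgen _ hT (abs_lt.mpr ⟨by linarith, hub⟩)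
    rw [hNM, sub_self, zero_mul] at hT
    linarith
  rw [hdm0] at hT
  simp only [Nat.cast_zero, zero_add] at hT
  have h2lt : (2:ℝ) < Real.sqrt 5 := by
    nlinarith [Real.sq_sqrt (show (0:ℝ) ≤ 5 by norm_num), Real.sqrt_nonneg 5]
  have hNM : (N:ℝ) = (M:ℝ) := by
    apply hNMgen _ hT
    calc |A + Eb| ≤ |A| + |Eb| := abs_add_le _ _
      _ < Real.sqrt 5 := by
          rw [abs_of_nonneg hEb_nonneg]
          linarith [hAbs, hEc_lt, hEb_lt]
  exact ⟨by exact_mod_cast hNM, hdm0⟩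
end

section
/- For integers a ≥ 3 and n with φ^n ≥ 2a, letting r = n mod π(a), b_r = (-F_r^{-1} mod a), x_r = b_r/a, and y_n = √5/a − x_r·(−φ)^{−n}, we have y_n ∈ (0,1) and x_r + y_n·φ^{−n} ∈ (0,1), and (a^{-1} mod F_n) = (x_r + y_n·φ^{−n})·φ^n/√5. -/
open Real goldenRatio

/-- The Pisano period of `a`. -/
noncomputable def pisano (a : ℕ) : ℕ :=
  sInf {k | 0 < k ∧ ∀ n, Nat.fib (n + k) % a = Nat.fib n % a}

/-- The least positive multiplicative inverse of `a` modulo `m`. -/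
noncomputable def invMod (a m : ℕ) : ℕ :=
  sInf {b | 0 < b ∧ a * b % m = 1 % m}

/-- The Fibonacci step as a permutation of pairs mod `a`. -/
private def fibEquiv (a : ℕ) : (ZMod a × ZMod a) ≃ (ZMod a × ZMod a) where
  toFun p := (p.2, p.1 + p.2)
  invFun p := (p.2 - p.1, p.1)
  left_inv p := by simp
  right_inv p := by simp

private lemma fibEquiv_iterate (a : ℕ) (n : ℕ) :
    (fibEquiv a)^[n] ((0 : ZMod a), (1 : ZMod a)) =
      ((Nat.fib n : ZMod a), (Nat.fib (n + 1) : ZMod a)) := by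
  induction n with
  | zero => simp
  | succ n ih =>
      rw [Function.iterate_succ_apply', ih]
      simp only [fibEquiv, Equiv.coe_fn_mk]
      congr 1
      rw [show n + 1 + 1 = n + 2 from rfl, Nat.fib_add_two]
      push_cast
      ring

private lemma pisano_spec (a : ℕ) (ha : 0 < a) :
    0 < pisano a ∧ ∀ n, Nat.fib (n + pisano a) % a = Nat.fib n % a := by
  haveI : NeZero a := ⟨by omega⟩
  have hne : {k | 0 < k ∧ ∀ n, Nat.fib (n + k) % a = Nat.fib n % a}.Nonempty := by
    obtain ⟨i, j, hij, heq⟩ :=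
      Finite.exists_ne_map_eq_of_infinite
        (fun n : ℕ => (fibEquiv a)^[n] ((0 : ZMod a), (1 : ZMod a)))
    wlog hlt : i < j generalizing i j
    · exact this j i hij.symm heq.symm (by omega)
    have hinj : Function.Injective ((fibEquiv a)^[i]) :=
      Function.Injective.iterate (fibEquiv a).injective i
    have hk : (fibEquiv a)^[j - i] ((0 : ZMod a), 1) = ((0 : ZMod a), 1) := by
      apply hinj
      rw [← Function.iterate_add_apply]
      rw [show i + (j - i) = j by omega]
      exact heq.symm
    refine ⟨j - i, by omega, fun n => ?_⟩
    have h2 : (fibEquiv a)^[n + (j - i)] ((0 : ZMod a), 1) =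
        (fibEquiv a)^[n] ((0 : ZMod a), 1) := by
      rw [Function.iterate_add_apply, hk]
    rw [fibEquiv_iterate, fibEquiv_iterate] at h2
    have h3 : ((Nat.fib (n + (j - i)) : ZMod a)) = (Nat.fib n : ZMod a) :=
      congrArg Prod.fst h2
    exact (ZMod.natCast_eq_natCast_iff _ _ _).mp h3
  exact Nat.sInf_mem hne

private lemma fib_mod_pisano (a n : ℕ) (ha : 0 < a) :
    Nat.fib n % a = Nat.fib (n % pisano a) % a := by
  obtain ⟨hk, hper⟩ := pisano_spec a ha
  set k := pisano a with hkdef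
  have key : ∀ j m, Nat.fib (m + k * j) % a = Nat.fib m % a := by
    intro j
    induction j with
    | zero => intro m; simp
    | succ j ih =>
        intro m
        have : m + k * (j + 1) = (m + k * j) + k := by ring
        rw [this, hper, ih]
  have h1 : n = n % k + k * (n / k) := by
    rw [Nat.mod_add_div]
  calc Nat.fib n % a = Nat.fib (n % k + k * (n / k)) % a := by rw [← h1]
    _ = Nat.fib (n % k) % a := key _ _

set_option maxHeartbeats 1000000 in
theorem stmt16 (a n : ℕ) (ha : 3 ≤ a) (hφ : 2 * (a : ℝ) ≤ φ ^ n)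
    (h : Nat.gcd a (Nat.fib n) = 1)
    (b : ℕ) (hb1 : 1 ≤ b) (hba : b < a)
    (hbr : (b * Nat.fib (n % pisano a) + 1) % a = 0)
    (x y : ℝ) (hx : x = (b : ℝ) / a)
    (hy : y = Real.sqrt 5 / a - x * (-φ)⁻¹ ^ n) :
    y ∈ Set.Ioo (0 : ℝ) 1 ∧ x + y * φ⁻¹ ^ n ∈ Set.Ioo (0 : ℝ) 1 ∧
      (invMod a (Nat.fib n) : ℝ) = (x + y * φ⁻¹ ^ n) * φ ^ n / Real.sqrt 5 := by
  have ha0 : 0 < a := by omega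
  have haR : (3 : ℝ) ≤ (a : ℝ) := by exact_mod_cast ha
  -- basic real facts
  have h5a : (0:ℝ) < Real.sqrt 5 := Real.sqrt_pos.mpr (by norm_num)
  have h5sq : Real.sqrt 5 ^ 2 = 5 := Real.sq_sqrt (by norm_num)
  have h5l : (2:ℝ) < Real.sqrt 5 := by nlinarith
  have h5u : Real.sqrt 5 < 2.5 := by nlinarith
  have hφpos : (0:ℝ) < φ := goldenRatio_pos
  have hφn_pos : (0:ℝ) < φ ^ n := pow_pos hφpos n
  have hψ : ((-φ)⁻¹ : ℝ) = ψ := by rw [inv_neg, inv_goldenRatio, neg_neg]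
  have hinvpow : (φ⁻¹ : ℝ) ^ n = (φ ^ n)⁻¹ := by rw [inv_pow]
  have hφ1 : (φ⁻¹ : ℝ) ^ n * φ ^ n = 1 := by
    rw [← mul_pow, inv_mul_cancel₀ goldenRatio_ne_zero, one_pow]
  have hψabs : |ψ ^ n| = (φ⁻¹ : ℝ) ^ n := by
    rw [abs_pow, abs_of_neg goldenConj_neg, ← inv_goldenRatio]
  have hsmall : (φ⁻¹ : ℝ) ^ n ≤ 1 / (2 * a) := by
    rw [hinvpow]
    rw [one_div]
    exact inv_anti₀ (by positivity) hφ
  -- n ≥ 3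
  have hn3 : 3 ≤ n := by
    by_contra hc
    push_neg at hc
    have h2 : φ ^ n ≤ φ ^ 2 :=
      pow_le_pow_right₀ (le_of_lt one_lt_goldenRatio) (by omega)
    nlinarith [goldenRatio_lt_two, goldenRatio_sq]
  have hF2 : 2 ≤ Nat.fib n := by
    calc 2 = Nat.fib 3 := by decide
      _ ≤ Nat.fib n := Nat.fib_mono hn3
  have hF0 : 0 < Nat.fib n := by omega
  -- divisibility
  have hmod : Nat.fib (n % pisano a) ≡ Nat.fib n [MOD a] :=
    (fib_mod_pisano a n ha0).symm
  have hdvd : a ∣ b * Nat.fib n + 1 := by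
    have h1 : b * Nat.fib (n % pisano a) + 1 ≡ b * Nat.fib n + 1 [MOD a] :=
      ((hmod.mul_left b).add_right 1)
    have h2 : (b * Nat.fib n + 1) % a = 0 := by
      rw [← h1, hbr]
    exact Nat.dvd_of_mod_eq_zero h2
  set c := (b * Nat.fib n + 1) / a with hcdef
  have hac : a * c = b * Nat.fib n + 1 := Nat.mul_div_cancel' hdvd
  have hc1 : 1 ≤ c := by
    rcases Nat.eq_zero_or_pos c with h0 | h0
    · rw [h0, Nat.mul_zero] at hac; omega
    · omega
  have hcF : c < Nat.fib n := by
    have h1 : a * c < a * Nat.fib n := by nlinarith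
    exact Nat.lt_of_mul_lt_mul_left h1
  -- invMod computation
  have hmod1 : (b * Nat.fib n + 1) % Nat.fib n = 1 % Nat.fib n := by
    rw [Nat.add_comm, Nat.add_mul_mod_self_right]
  have hcS : c ∈ {d | 0 < d ∧ a * d % Nat.fib n = 1 % Nat.fib n} := by
    refine ⟨hc1, ?_⟩
    rw [hac, hmod1]
  have hmin : ∀ d ∈ {d | 0 < d ∧ a * d % Nat.fib n = 1 % Nat.fib n}, c ≤ d := by
    rintro d ⟨hd0, hd⟩
    have h1 : a * d ≡ a * c [MOD Nat.fib n] := by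
      unfold Nat.ModEq
      rw [hd, hac, hmod1]
    have h2 : d ≡ c [MOD Nat.fib n] :=
      Nat.ModEq.cancel_left_of_coprime (by rwa [Nat.gcd_comm]) h1
    by_contra hlt
    push_neg at hlt
    have h3 : (Nat.fib n : ℤ) ∣ (c : ℤ) - d := h2.dvd
    have h4 : (0:ℤ) < (c : ℤ) - d := by
      have : (d:ℤ) < c := by exact_mod_cast hlt
      omega
    have h5 : (Nat.fib n : ℤ) ≤ (c : ℤ) - d := Int.le_of_dvd h4 h3
    have h6 : (c:ℤ) < Nat.fib n := by exact_mod_cast hcF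
    omega
  have hinv : invMod a (Nat.fib n) = c := by
    unfold invMod
    exact le_antisymm (Nat.sInf_le hcS) (hmin _ (Nat.sInf_mem ⟨c, hcS⟩))
  -- real identity
  have haR0 : (a:ℝ) ≠ 0 := by positivity
  have hfibR : (Nat.fib n : ℝ) * Real.sqrt 5 = φ ^ n - ψ ^ n := by
    rw [Real.coe_fib_eq, div_mul_cancel₀ _ (ne_of_gt h5a)]
  have hcaR : (a:ℝ) * c = (b:ℝ) * Nat.fib n + 1 := by exact_mod_cast hac
  have hval' : (b:ℝ) + (Real.sqrt 5 - (b:ℝ) * ψ ^ n) * (φ⁻¹:ℝ) ^ n =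
      ((a:ℝ) * c) * Real.sqrt 5 * (φ⁻¹:ℝ) ^ n := by
    linear_combination (-(Real.sqrt 5) * (φ⁻¹:ℝ) ^ n) * hcaR +
      (-(b:ℝ) * (φ⁻¹:ℝ) ^ n) * hfibR + (-(b:ℝ)) * hφ1
  have hval : x + y * φ⁻¹ ^ n = (c:ℝ) * Real.sqrt 5 * (φ⁻¹:ℝ) ^ n := by
    rw [hy, hψ, hx]
    have h1 : ((b:ℝ) + (Real.sqrt 5 - (b:ℝ) * ψ ^ n) * (φ⁻¹:ℝ) ^ n) / a =
        (((a:ℝ) * c) * Real.sqrt 5 * (φ⁻¹:ℝ) ^ n) / a := by rw [hval']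
    calc (b:ℝ)/a + (Real.sqrt 5 / a - (b:ℝ)/a * ψ ^ n) * φ⁻¹ ^ n
        = ((b:ℝ) + (Real.sqrt 5 - (b:ℝ) * ψ ^ n) * (φ⁻¹:ℝ) ^ n) / a := by ring
      _ = (((a:ℝ) * c) * Real.sqrt 5 * (φ⁻¹:ℝ) ^ n) / a := h1
      _ = (c:ℝ) * Real.sqrt 5 * (φ⁻¹:ℝ) ^ n := by
          field_simp
  constructor
  · -- y ∈ (0,1)
    rw [hy, hψ, hx]
    have hbR : (1:ℝ) ≤ (b:ℝ) := by exact_mod_cast hb1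
    have hbaR : (b:ℝ) < a := by exact_mod_cast hba
    have habs : |(b:ℝ) / a * ψ ^ n| ≤ 1 / (2 * a) := by
      rw [abs_mul, hψabs]
      have h1 : |(b:ℝ) / a| ≤ 1 := by
        rw [abs_of_pos (by positivity)]
        rw [div_le_one (by positivity)]
        linarith
      calc |(b:ℝ) / a| * (φ⁻¹:ℝ)^n ≤ 1 * (1 / (2*a)) := by
            apply mul_le_mul h1 hsmall (by positivity) (by norm_num)
        _ = 1 / (2*a) := by ring
    have h1 := abs_le.mp habs
    constructor
    · have hA : (0:ℝ) < (a:ℝ) := by linarith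
      have : Real.sqrt 5 / a - 1 / (2*a) > 0 := by
        rw [gt_iff_lt, sub_pos, div_lt_div_iff₀ (by positivity) hA]
        have h2 : (2:ℝ) * (2*a) ≤ Real.sqrt 5 * (2*a) :=
          mul_le_mul_of_nonneg_right (le_of_lt h5l) (by positivity)
        linarith
      linarith [h1.2]
    · have hA : (0:ℝ) < (a:ℝ) := by linarith
      have : Real.sqrt 5 / a + 1 / (2*a) < 1 := by
        rw [div_add_div _ _ haR0 (by positivity)]
        rw [div_lt_one (by positivity)]
        have e1 : Real.sqrt 5 * (2*(a:ℝ)) < 2.5 * (2*a) :=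
          mul_lt_mul_of_pos_right h5u (by positivity)
        have e2 : (6:ℝ) * (a:ℝ) ≤ a * (2*a) := by
          have := mul_nonneg (le_of_lt hA) (by linarith : (0:ℝ) ≤ (a:ℝ) - 3)
          nlinarith
        linarith
      linarith [h1.1]
  constructor
  · -- x + y φ⁻¹^n ∈ (0,1)
    rw [hval]
    have hcR : (1:ℝ) ≤ (c:ℝ) := by exact_mod_cast hc1
    have hinvn : (0:ℝ) < (φ⁻¹:ℝ)^n := by positivity
    constructor
    · positivity
    · -- c√5 φ⁻¹^n < 1
      have hcFn : (c:ℝ) ≤ (Nat.fib n : ℝ) - 1 := by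
        have : (c:ℝ) + 1 ≤ (Nat.fib n : ℝ) := by exact_mod_cast hcF
        linarith
      have hψn1 : |ψ ^ n| < Real.sqrt 5 := by
        rw [hψabs]
        calc (φ⁻¹:ℝ)^n ≤ 1 / (2*a) := hsmall
          _ < Real.sqrt 5 := by
            rw [div_lt_iff₀ (by positivity)]
            have h2 : (2:ℝ) * (2*a) ≤ Real.sqrt 5 * (2*a) :=
              mul_le_mul_of_nonneg_right (le_of_lt h5l) (by positivity)
            linarith
      have h2 : (c:ℝ) * Real.sqrt 5 < φ ^ n := by
        have h3 := (abs_lt.mp hψn1).1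
        have h4 : (c:ℝ) * Real.sqrt 5 ≤ ((Nat.fib n : ℝ) - 1) * Real.sqrt 5 :=
          mul_le_mul_of_nonneg_right hcFn (le_of_lt h5a)
        nlinarith [hfibR]
      calc (c:ℝ) * Real.sqrt 5 * (φ⁻¹:ℝ)^n < φ ^ n * (φ⁻¹:ℝ)^n := by
            apply mul_lt_mul_of_pos_right h2 hinvn
        _ = 1 := by rw [mul_comm]; exact hφ1
  · -- the formula
    rw [hinv, hval]
    rw [mul_assoc ((c:ℝ) * Real.sqrt 5), hφ1, mul_one, mul_div_assoc,
      div_self (ne_of_gt h5a), mul_one]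
end
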